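/- Let (X, μ) be a measure space, p ∈ (1, ∞), and g ∈ L^p(X) with ‖g‖_{L^p} ≤ C. Then for every k ∈ ℕ there exists λ_k ∈ [2^{2^k}, 2^{2^{k+1}}] such that λ_k^p · μ({x : |g(x)| > λ_k}) ≤ C^p / (ln 2 · p · 2^k). -/

import Mathlib

open MeasureTheory

/-- Dyadic level selection: if `‖g‖_{L^p} ≤ C` then for each `k` there is
`λ_k ∈ [2^{2^k}, 2^{2^{k+1}}]` with `λ_k^p μ({|g| > λ_k}) ≤ C^p/(ln 2 · p · 2^k)`. -/
theorem stmt5 {X : Type*} [MeasureSpace X] (p C : ℝ) (hp : 1 < p) (hC : 0 < C)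
    (g : X → ℝ) (hmeas : Measurable g)
    (hg : (∫⁻ x, ENNReal.ofReal (|g x| ^ p)) ≤ ENNReal.ofReal (C ^ p)) :
    ∀ k : ℕ, ∃ l : ℝ, l ∈ Set.Icc ((2 : ℝ) ^ (2 ^ k)) ((2 : ℝ) ^ (2 ^ (k + 1))) ∧
      l ^ p * (volume {x | l < |g x|}).toReal ≤ C ^ p / (Real.log 2 * p * 2 ^ k) := by
  intro k
  have hp0 : (0 : ℝ) < p := by linarith
  set a : ℝ := (2 : ℝ) ^ (2 ^ k) with ha_def
  set b : ℝ := (2 : ℝ) ^ (2 ^ (k + 1)) with hb_def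
  have ha0 : (0 : ℝ) < a := by positivity
  have hb0 : (0 : ℝ) < b := by positivity
  have hab : a < b := by
    apply pow_lt_pow_right₀ one_lt_two
    exact Nat.pow_lt_pow_right one_lt_two (Nat.lt_succ_self k)
  have hlog2 : (0 : ℝ) < Real.log 2 := Real.log_pos one_lt_two
  set M : ℝ := C ^ p / (Real.log 2 * p * 2 ^ k) with hM_def
  have hM0 : 0 < M := by
    apply div_pos (Real.rpow_pos_of_pos hC p)
    positivity
  by_contra hcon
  push_neg at hcon
  -- hcon : ∀ l ∈ Icc a b, M < l ^ p * (volume {x | l < |g x|}).toReal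
  -- Layer cake formula
  have key : (∫⁻ x, ENNReal.ofReal (|g x| ^ p)) =
      ENNReal.ofReal p *
        ∫⁻ t in Set.Ioi (0 : ℝ), volume {x | t < |g x|} * ENNReal.ofReal (t ^ (p - 1)) :=
    lintegral_rpow_eq_lintegral_meas_lt_mul volume (ae_of_all _ fun x => abs_nonneg _)
      hmeas.abs.aemeasurable hp0
  set G : ℝ → ENNReal := fun t => volume {x | t < |g x|} * ENNReal.ofReal (t ^ (p - 1)) with hG_def
  set F : ℝ → ENNReal := fun t => ENNReal.ofReal (M / t) with hF_def
  have hGmeas : Measurable G := by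
    apply Measurable.mul
    · exact Antitone.measurable fun s t hst =>
        measure_mono fun x hx => lt_of_le_of_lt hst hx
    · exact Measurable.ennreal_ofReal (by fun_prop)
  -- pointwise strict bound on Ioc a b
  have hFG : ∀ t ∈ Set.Ioc a b, F t < G t := by
    intro t ht
    have ht0 : 0 < t := lt_trans ha0 ht.1
    have hcont := hcon t ⟨ht.1.le, ht.2⟩
    have htp : (0 : ℝ) < t ^ p := Real.rpow_pos_of_pos ht0 p
    have h1 : ENNReal.ofReal (M / t ^ p) < volume {x | t < |g x|} := by
      rcases eq_or_ne (volume {x | t < |g x|}) ⊤ with hν | hν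
      · rw [hν]; exact ENNReal.ofReal_lt_top
      · rw [ENNReal.ofReal_lt_iff_lt_toReal (by positivity) hν]
        rw [div_lt_iff₀ htp]
        linarith [hcont]
    have heq : M / t ^ p * t ^ (p - 1) = M / t := by
      rw [show t ^ (p - 1) = t ^ p / t by rw [Real.rpow_sub ht0, Real.rpow_one]]
      field_simp
    have htp1 : (0 : ℝ) < t ^ (p - 1) := Real.rpow_pos_of_pos ht0 _
    show ENNReal.ofReal (M / t) < volume {x | t < |g x|} * ENNReal.ofReal (t ^ (p - 1))
    calc ENNReal.ofReal (M / t)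
        = ENNReal.ofReal (M / t ^ p) * ENNReal.ofReal (t ^ (p - 1)) := by
          rw [← heq, ENNReal.ofReal_mul (by positivity)]
      _ < volume {x | t < |g x|} * ENNReal.ofReal (t ^ (p - 1)) :=
          (ENNReal.mul_lt_mul_iff_left (by simp [htp1]) ENNReal.ofReal_ne_top).mpr h1
  -- value of ∫ F over Ioc a b
  have hint : IntegrableOn (fun t => M / t) (Set.Ioc a b) := by
    apply (ContinuousOn.integrableOn_Icc ?_).mono_set Set.Ioc_subset_Icc_self
    exact continuousOn_const.div continuousOn_id fun x hx => ne_of_gt (lt_of_lt_of_le ha0 hx.1)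
  have hFval : ∫⁻ t in Set.Ioc a b, F t = ENNReal.ofReal (M * Real.log (b / a)) := by
    rw [hF_def, ← ofReal_integral_eq_lintegral_ofReal hint ?_]
    · congr 1
      have : ∫ t in Set.Ioc a b, M / t = ∫ t in a..b, M / t := by
        rw [intervalIntegral.integral_of_le hab.le]
      rw [this]
      simp_rw [div_eq_mul_inv]
      rw [intervalIntegral.integral_const_mul, integral_inv_of_pos ha0 hb0,
        div_eq_mul_inv]
    · filter_upwards [self_mem_ae_restrict (measurableSet_Ioc : MeasurableSet (Set.Ioc a b))]
        with t ht
      have : 0 < t := lt_trans ha0 ht.1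
      positivity
  have hFfin : ∫⁻ t in Set.Ioc a b, F t ≠ ⊤ := by
    rw [hFval]; exact ENNReal.ofReal_ne_top
  have hIoc0 : volume (Set.Ioc a b) ≠ 0 := by
    rw [Real.volume_Ioc]
    simp only [ne_eq, ENNReal.ofReal_eq_zero, not_le]
    linarith
  have hstrict : ∫⁻ t in Set.Ioc a b, F t < ∫⁻ t in Set.Ioc a b, G t :=
    setLIntegral_strict_mono measurableSet_Ioc hIoc0 hGmeas hFfin (ae_of_all _ hFG)
  -- log (b/a) = 2^k * log 2
  have hba : b / a = (2 : ℝ) ^ (2 ^ k : ℕ) := by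
    rw [div_eq_iff ha0.ne', ← pow_add]
    rw [hb_def]
    congr 1
    rw [pow_succ]
    ring
  have hlogba : Real.log (b / a) = (2 : ℝ) ^ k * Real.log 2 := by
    rw [hba, Real.log_pow]
    push_cast
    ring
  have hfinal : p * (M * Real.log (b / a)) = C ^ p := by
    rw [hlogba, hM_def]
    field_simp
  -- the contradiction
  have hchain : ENNReal.ofReal (C ^ p) < ENNReal.ofReal (C ^ p) := by
    calc ENNReal.ofReal (C ^ p)
        = ENNReal.ofReal p * ENNReal.ofReal (M * Real.log (b / a)) := by
          rw [← ENNReal.ofReal_mul hp0.le, hfinal]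
      _ = ENNReal.ofReal p * ∫⁻ t in Set.Ioc a b, F t := by rw [hFval]
      _ < ENNReal.ofReal p * ∫⁻ t in Set.Ioc a b, G t := by
          exact (ENNReal.mul_lt_mul_iff_right (by simp [hp0]) ENNReal.ofReal_ne_top).mpr hstrict
      _ ≤ ENNReal.ofReal p * ∫⁻ t in Set.Ioi (0 : ℝ), G t := by
          gcongr
          exact fun t ht => lt_trans ha0 ht.1
      _ = ∫⁻ x, ENNReal.ofReal (|g x| ^ p) := key.symm
      _ ≤ ENNReal.ofReal (C ^ p) := hg
  exact absurd hchain (lt_irrefl _)
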